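/- Let G be a sublattice of E and E an ideal of a vector lattice F. If a net {x_α} in G is order bounded in E (i.e., |x_α| ≤ u for some u ∈ E⁺ and all α) and is F-order convergent to 0, then {x_α} is E-order convergent to 0. -/
import Mathlib


/-- A net `x` in a vector lattice `F` is `F`-order convergent to `a`: there is a
nonempty downward-directed family `D` in `F` with infimum `0` (the range of a net
`y_β ↓ 0` in `F`) such that for each `d ∈ D`, eventually `|x α - a| ≤ d`. -/
def FOrderConv {F : Type*} [Lattice F] [AddCommGroup F] {ι : Type*} [Preorder ι]
    (x : ι → F) (a : F) : Prop :=
  ∃ D : Set F, D.Nonempty ∧ DirectedOn (· ≥ ·) D ∧ IsGLB D 0 ∧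
    ∀ d ∈ D, ∃ α₀ : ι, ∀ α, α₀ ≤ α → |x α - a| ≤ d

/-- Order convergence relative to a sublattice `E` of `F`: the dominating family lies
in `E` and decreases to `0` *in `E`* (`0` is its greatest lower bound among elements
of `E`). -/
def OrderConvIn {F : Type*} [Lattice F] [AddCommGroup F] (E : Set F) {ι : Type*} [Preorder ι]
    (x : ι → F) (a : F) : Prop :=
  ∃ D : Set F, D ⊆ E ∧ D.Nonempty ∧ DirectedOn (· ≥ ·) D ∧
    (0 ∈ lowerBounds D ∧ ∀ b ∈ E, b ∈ lowerBounds D → b ≤ 0) ∧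
    ∀ d ∈ D, ∃ α₀ : ι, ∀ α, α₀ ≤ α → |x α - a| ≤ d

/-- Let `G` be a sublattice of an ideal `E` of `F`. A net in `G` that is order bounded
in `E` and `F`-order convergent to `0` is `E`-order convergent to `0`. -/
theorem idealOrderConv_of_fOrderConv_of_bounded {F : Type*} [Lattice F] [AddCommGroup F]
    [CovariantClass F F (· + ·) (· ≤ ·)] [Module ℝ F]
    (E : Set F)
    (hEsup : ∀ a ∈ E, ∀ b ∈ E, a ⊔ b ∈ E) (hEinf : ∀ a ∈ E, ∀ b ∈ E, a ⊓ b ∈ E)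
    (hEadd : ∀ a ∈ E, ∀ b ∈ E, a + b ∈ E) (hEsmul : ∀ (c : ℝ), ∀ a ∈ E, c • a ∈ E)
    (hEsolid : ∀ u v : F, |u| ≤ |v| → v ∈ E → u ∈ E)
    (G : Set F) (hGE : G ⊆ E)
    (hGsup : ∀ a ∈ G, ∀ b ∈ G, a ⊔ b ∈ G) (hGinf : ∀ a ∈ G, ∀ b ∈ G, a ⊓ b ∈ G)
    (hGadd : ∀ a ∈ G, ∀ b ∈ G, a + b ∈ G) (hGsmul : ∀ (c : ℝ), ∀ a ∈ G, c • a ∈ G)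
    {ι : Type*} [Nonempty ι] [Preorder ι] [IsDirected ι (· ≤ ·)]
    (x : ι → F) (hx : ∀ α, x α ∈ G)
    (u : F) (hu : u ∈ E) (hu0 : 0 ≤ u) (hbdd : ∀ α, |x α| ≤ u)
    (h : FOrderConv x 0) : OrderConvIn E x 0 := by
  obtain ⟨D, ⟨d₀, hd₀⟩, hdir, hglb, hev⟩ := h
  have hpos : ∀ d ∈ D, (0 : F) ≤ d := fun d hd => hglb.1 hd
  refine ⟨(· ⊓ u) '' D, ?_, ⟨d₀ ⊓ u, ⟨d₀, hd₀, rfl⟩⟩, ?_, ⟨?_, ?_⟩, ?_⟩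
  · rintro _ ⟨d, hd, rfl⟩
    exact hEsolid _ u (by
      rw [abs_of_nonneg (le_inf (hpos d hd) hu0), abs_of_nonneg hu0]
      exact inf_le_right) hu
  · rintro _ ⟨d₁, hd₁, rfl⟩ _ ⟨d₂, hd₂, rfl⟩
    obtain ⟨d, hd, h1, h2⟩ := hdir d₁ hd₁ d₂ hd₂
    exact ⟨d ⊓ u, ⟨d, hd, rfl⟩, inf_le_inf_right u h1, inf_le_inf_right u h2⟩
  · rintro _ ⟨d, hd, rfl⟩
    exact le_inf (hpos d hd) hu0
  · intro b _ hb
    exact hglb.2 fun d hd => le_trans (hb ⟨d, hd, rfl⟩) inf_le_left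
  · rintro _ ⟨d, hd, rfl⟩
    obtain ⟨α₀, hα₀⟩ := hev d hd
    exact ⟨α₀, fun α hα => by
      rw [sub_zero] at *
      exact le_inf (by simpa using hα₀ α hα) (hbdd α)⟩
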